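/- Let k be a field and D a division ring containing k in its center. Suppose the cardinality of k (as a set) is strictly greater than the dimension of D as a k-vector space (e.g. k uncountable and D of countable dimension). Then every element of D is algebraic over k. -/
import Mathlib


/-- If `D` is a division ring containing the field `k` in its center and the cardinality of `k`
is strictly greater than the `k`-dimension of `D`, then every element of `D` is algebraic
over `k`. -/
theorem stmt2 (k D : Type u) [Field k] [DivisionRing D] [Algebra k D]
    (h : Module.rank k D < Cardinal.mk k) :
    ∀ x : D, IsAlgebraic k x := by
  classical
  intro x
  by_contra hx
  have htr : ∀ p : Polynomial k, Polynomial.aeval x p = 0 → p = 0 :=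
    transcendental_iff.mp hx
  -- the family λ ↦ (x - λ)⁻¹ is linearly independent
  set f : k → D := fun l => (x - algebraMap k D l)⁻¹ with hf
  have hli : LinearIndependent k f := by
    rw [linearIndependent_iff']
    intro s g hg i hi
    -- multiply by ∏_{j ∈ s} (x - a j)
    set P : Polynomial k := ∏ j ∈ s, (Polynomial.X - Polynomial.C j) with hP
    have hsub : ∀ l : k, x - algebraMap k D l =
        Polynomial.aeval x (Polynomial.X - Polynomial.C l) := by
      intro l; simp
    have hne : ∀ l : k, x - algebraMap k D l ≠ 0 := by
      intro l hl
      have := htr _ (by rw [← hsub l] at *; exact hl)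
      exact Polynomial.X_sub_C_ne_zero l this
    have key : ∀ j ∈ s, f j * Polynomial.aeval x P =
        Polynomial.aeval x (∏ l ∈ s.erase j, (Polynomial.X - Polynomial.C l)) := by
      intro j hj
      have : P = (Polynomial.X - Polynomial.C j) *
          ∏ l ∈ s.erase j, (Polynomial.X - Polynomial.C l) :=
        (Finset.mul_prod_erase s _ hj).symm
      rw [this, map_mul, ← hsub j, hf]
      exact inv_mul_cancel_left₀ (hne j) _
    have hsum : (Polynomial.aeval x)
        (∑ j ∈ s, g j • ∏ l ∈ s.erase j, (Polynomial.X - Polynomial.C l)) = 0 := by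
      rw [map_sum]
      have : ∀ j ∈ s, (Polynomial.aeval x)
          (g j • ∏ l ∈ s.erase j, (Polynomial.X - Polynomial.C l)) =
          (g j • f j) * Polynomial.aeval x P := by
        intro j hj
        rw [map_smul, ← key j hj, smul_mul_assoc]
      rw [Finset.sum_congr rfl this, ← Finset.sum_mul, hg, zero_mul]
    have hq : (∑ j ∈ s, g j • ∏ l ∈ s.erase j, (Polynomial.X - Polynomial.C l)) = 0 :=
      htr _ hsum
    -- evaluate at i
    have := congrArg (Polynomial.eval i) hq
    rw [Polynomial.eval_finset_sum] at this
    simp only [Polynomial.eval_smul, Polynomial.eval_prod, Polynomial.eval_sub,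
      Polynomial.eval_X, Polynomial.eval_C, Polynomial.eval_zero, smul_eq_mul] at this
    rw [Finset.sum_eq_single i] at this
    · have hprod : (∏ l ∈ s.erase i, (i - l)) ≠ 0 := by
        apply Finset.prod_ne_zero_iff.mpr
        intro l hl
        exact sub_ne_zero.mpr (Ne.symm (Finset.ne_of_mem_erase hl))
      exact (mul_eq_zero.mp this).resolve_right hprod
    · intro j hj hji
      have : i ∈ s.erase j := Finset.mem_erase.mpr ⟨Ne.symm hji, hi⟩
      rw [Finset.prod_eq_zero this (by simp), mul_zero]
    · intro hi'; exact absurd hi hi'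
  exact absurd (hli.cardinal_le_rank) (not_le.mpr h)
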